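/- Let X be a metric space with Hausdorff dimension d₀ = dim_H(X). Then the d₀-dimensional Hausdorff measure H^{d₀} is absolutely continuous with respect to the local Hausdorff measure H_loc: every Borel set N with H_loc(N) = 0 satisfies H^{d₀}(N) = 0. -/

import Mathlib

open Set MeasureTheory ENNReal

/-- Extended-real power `a ^ b` for `a b : ℝ≥0∞`, extending `rpow` by continuity in the
exponent. -/
noncomputable def epow (a b : ℝ≥0∞) : ℝ≥0∞ :=
  if b = ⊤ then (if a < 1 then 0 else if a = 1 then 1 else ⊤) else a ^ b.toReal

/-- The local Hausdorff measure: the Carathéodory metric measure with weight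
`τ(U) = |U|^{dim_H U}`. -/
noncomputable def locHausdorff (X : Type*) [MetricSpace X] [MeasurableSpace X]
    [BorelSpace X] : Measure X :=
  Measure.mkMetric' (fun U => epow (EMetric.diam U) (dimH U))

/-- Outer-measure monotonicity of `mkMetric'` given comparison of the weights on sets of small
diameter. -/
theorem mkMetric'_mono_aux {X : Type*} [EMetricSpace X] {m₁ m₂ : Set X → ℝ≥0∞}
    (h : ∀ s : Set X, EMetric.diam s ≤ 1 → m₁ s ≤ m₂ s) :
    (OuterMeasure.mkMetric' m₁ : OuterMeasure X) ≤ OuterMeasure.mkMetric' m₂ := by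
  refine iSup₂_le fun r hr => ?_
  have h1 : (0 : ℝ≥0∞) < min r 1 := lt_min hr zero_lt_one
  calc OuterMeasure.mkMetric'.pre m₁ r
      ≤ OuterMeasure.mkMetric'.pre m₁ (min r 1) :=
        OuterMeasure.mkMetric'.mono_pre _ (min_le_left _ _)
    _ ≤ OuterMeasure.mkMetric'.pre m₂ (min r 1) :=
        OuterMeasure.mkMetric'.le_pre.2 fun s hs =>
          (OuterMeasure.mkMetric'.pre_le hs).trans (h s (hs.trans (min_le_right _ _)))
    _ ≤ OuterMeasure.mkMetric' m₂ := le_iSup₂_of_le (min r 1) h1 le_rfl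

/-- If `d₀ = dim_H X`, then `H^{d₀}` is absolutely continuous with respect to the local
Hausdorff measure: every Borel set of `H_loc`-measure zero has `H^{d₀}`-measure zero. -/
theorem hausdorff_ac_locHausdorff {X : Type*} [MetricSpace X] [MeasurableSpace X]
    [BorelSpace X] (d₀ : ℝ) (h0 : 0 ≤ d₀)
    (hd : dimH (univ : Set X) = ENNReal.ofReal d₀) :
    ∀ N : Set X, MeasurableSet N → locHausdorff X N = 0 → μH[d₀] N = 0 := by
  intro N hN hloc
  -- pointwise comparison of weights on sets of diameter at most 1
  have key : ∀ s : Set X, EMetric.diam s ≤ 1 →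
      EMetric.diam s ^ d₀ ≤ epow (EMetric.diam s) (dimH s) := by
    intro s hs
    have hdim : dimH s ≤ ENNReal.ofReal d₀ := hd ▸ dimH_mono (subset_univ s)
    have hne : dimH s ≠ ⊤ := (hdim.trans_lt ofReal_lt_top).ne
    rw [epow, if_neg hne]
    exact ENNReal.rpow_le_rpow_of_exponent_ge hs
      (by simpa [ENNReal.toReal_ofReal h0] using ENNReal.toReal_mono ofReal_ne_top hdim)
  have hle : (OuterMeasure.mkMetric' (fun s : Set X => EMetric.diam s ^ d₀)) ≤
      OuterMeasure.mkMetric' (fun s : Set X => epow (EMetric.diam s) (dimH s)) :=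
    mkMetric'_mono_aux key
  have h1 : μH[d₀] N = OuterMeasure.mkMetric' (fun s : Set X => EMetric.diam s ^ d₀) N := by
    rw [Measure.hausdorffMeasure, ← Measure.coe_toOuterMeasure,
      Measure.mkMetric_toOuterMeasure]
    rfl
  have h2 : locHausdorff X N =
      OuterMeasure.mkMetric' (fun s : Set X => epow (EMetric.diam s) (dimH s)) N := by
    rw [locHausdorff, Measure.mkMetric', toMeasure_apply _ _ hN]
  refine le_antisymm ?_ zero_le
  calc μH[d₀] N = OuterMeasure.mkMetric' (fun s : Set X => EMetric.diam s ^ d₀) N := h1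
    _ ≤ OuterMeasure.mkMetric' (fun s : Set X => epow (EMetric.diam s) (dimH s)) N := hle N
    _ = locHausdorff X N := h2.symm
    _ = 0 := hloc
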